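/- Consider n routes with per-rider profits p_i > 0 and demand functions Λ_i: ℝ≥0 → ℝ≥0 that are continuous, non-decreasing, concave with Λ_i(0) = 0. Define per-driver profit π_i(x) = p_i Λ_i(x)/x for x > 0 and π_i(0) = p_i·Λ_i'(0+) (right derivative). Let x^Eq ∈ ℝ≥0^n with Σ x_i^Eq = D be an equilibrium allocation: there exists π^Eq such that π_i(x_i^Eq) = π^Eq for all i with x_i^Eq > 0, and π_j(x_j^Eq) ≤ π^Eq for all j. Then for any x* ∈ ℝ≥0^n with Σ x_i* = D, Σ_i p_i Λ_i(x_i*) ≤ 2 Σ_i p_i Λ_i(x_i^Eq). -/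

import Mathlib

open Classical

lemma slope_anti_of_concave {f : ℝ → ℝ} (hconc : ConcaveOn ℝ (Set.Ici 0) f)
    (h0 : f 0 = 0) {u v : ℝ} (ha : 0 < u) (hab : u ≤ v) :
    f v / v ≤ f u / u := by
  rcases eq_or_lt_of_le hab with rfl | hlt
  · exact le_refl _
  · have hb : 0 < v := ha.trans hlt
    have ht : (0:ℝ) < u / v := div_pos ha hb
    have ht1 : u / v ≤ 1 := (div_le_one hb).2 hab
    have key := hconc.2 (Set.mem_Ici.2 hb.le) (Set.mem_Ici.2 (le_refl (0:ℝ)))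
      (show (0:ℝ) ≤ u / v from ht.le) (show (0:ℝ) ≤ 1 - u / v by linarith)
      (show u / v + (1 - u / v) = 1 by ring)
    have hkey : u / v * f v + (1 - u / v) * f 0 ≤ f (u / v * v + (1 - u / v) * 0) := key
    have hab2 : u / v * v + (1 - u / v) * 0 = u := by field_simp; ring
    rw [h0, hab2] at hkey
    rw [div_le_div_iff₀ hb ha]
    have : u / v * f v ≤ f u := by linarith
    calc f v * u = (u / v * f v) * v := by field_simp
    _ ≤ f u * v := by nlinarith


lemma slope_le_deriv {f : ℝ → ℝ} {d : ℝ} (hconc : ConcaveOn ℝ (Set.Ici 0) f)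
    (h0 : f 0 = 0) (hd : HasDerivWithinAt f d (Set.Ici 0) 0)
    {x : ℝ} (hx : 0 < x) : f x / x ≤ d := by
  have htend := hasDerivWithinAt_iff_tendsto_slope.1 hd
  have hset : Set.Ici (0:ℝ) \ {0} = Set.Ioi 0 := by
    ext y; simp [lt_iff_le_and_ne, eq_comm]
  rw [hset] at htend
  refine ge_of_tendsto htend ?_
  filter_upwards [eventually_nhdsWithin_of_eventually_nhds
    (Filter.Tendsto.eventually_lt_const hx Filter.tendsto_id),
    self_mem_nhdsWithin] with y hy1 (hy2 : y ∈ Set.Ioi 0)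
  have : f x / x ≤ f y / y := slope_anti_of_concave hconc h0 hy2 hy1.le
  simpa [slope_def_field, h0] using this

/-- Price of anarchy bound of 2 for cumulative driver profit: for any
equilibrium driver allocation `xEq` and any allocation `xs` of the same total
driver mass `D`, the cumulative profit of `xs` is at most twice that of `xEq`. -/
theorem profit_poa_le_two
    (n : ℕ) (p : Fin n → ℝ) (Λ : Fin n → ℝ → ℝ) (d : Fin n → ℝ) (D : ℝ)
    (hD : 0 < D)
    (hp : ∀ i, 0 < p i)
    (hcont : ∀ i, ContinuousOn (Λ i) (Set.Ici 0))
    (hmono : ∀ i, MonotoneOn (Λ i) (Set.Ici 0))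
    (hconc : ∀ i, ConcaveOn ℝ (Set.Ici 0) (Λ i))
    (h0 : ∀ i, Λ i 0 = 0)
    (hnn : ∀ i x, 0 ≤ x → 0 ≤ Λ i x)
    (hd : ∀ i, HasDerivWithinAt (Λ i) (d i) (Set.Ici 0) 0)
    (xEq : Fin n → ℝ) (hxEqnn : ∀ i, 0 ≤ xEq i) (hsumEq : ∑ i, xEq i = D)
    (πEq : ℝ)
    (heq1 : ∀ i, 0 < xEq i → p i * Λ i (xEq i) / xEq i = πEq)
    (heq2 : ∀ j, (if 0 < xEq j then p j * Λ j (xEq j) / xEq j else p j * d j) ≤ πEq)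
    (xs : Fin n → ℝ) (hxsnn : ∀ i, 0 ≤ xs i) (hsum : ∑ i, xs i = D) :
    ∑ i, p i * Λ i (xs i) ≤ 2 * ∑ i, p i * Λ i (xEq i) := by
  -- πEq ≥ 0
  have hex : ∃ i, 0 < xEq i := by
    by_contra h
    push_neg at h
    have : ∑ i, xEq i = 0 := Finset.sum_eq_zero (fun i _ => le_antisymm (h i) (hxEqnn i))
    linarith [hsumEq ▸ this]
  obtain ⟨i0, hi0⟩ := hex
  have hπnn : 0 ≤ πEq := by
    rw [← heq1 i0 hi0]
    exact div_nonneg (mul_nonneg (hp i0).le (hnn i0 _ (hxEqnn i0))) (hxEqnn i0)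
  -- equilibrium profit equals πEq * D
  have hprof : ∑ i, p i * Λ i (xEq i) = πEq * D := by
    rw [← hsumEq, Finset.mul_sum]
    refine Finset.sum_congr rfl (fun i _ => ?_)
    rcases eq_or_lt_of_le (hxEqnn i) with h | h
    · rw [← h, h0 i]; ring
    · have := heq1 i h
      field_simp at this
      linarith [this]
  -- pointwise bound
  have hpt : ∀ i, p i * Λ i (xs i) ≤ p i * Λ i (xEq i) + πEq * xs i := by
    intro i
    rcases le_or_gt (xs i) (xEq i) with hle | hlt
    · have h1 : Λ i (xs i) ≤ Λ i (xEq i) :=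
        hmono i (Set.mem_Ici.2 (hxsnn i)) (Set.mem_Ici.2 (hxEqnn i)) hle
      have h2 : 0 ≤ πEq * xs i := mul_nonneg hπnn (hxsnn i)
      nlinarith [hp i]
    · have hxs : 0 < xs i := (hxEqnn i).trans_lt hlt
      have hslope : p i * (Λ i (xs i) / xs i) ≤ πEq := by
        rcases eq_or_lt_of_le (hxEqnn i) with h | h
        · have h1 : Λ i (xs i) / xs i ≤ d i :=
            slope_le_deriv (hconc i) (h0 i) (hd i) hxs
          have h2 := heq2 i
          rw [if_neg (by rw [← h]; exact lt_irrefl 0)] at h2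
          calc p i * (Λ i (xs i) / xs i) ≤ p i * d i :=
                mul_le_mul_of_nonneg_left h1 (hp i).le
          _ ≤ πEq := h2
        · have h1 : Λ i (xs i) / xs i ≤ Λ i (xEq i) / xEq i :=
            slope_anti_of_concave (hconc i) (h0 i) h hlt.le
          have h2 := heq1 i h
          calc p i * (Λ i (xs i) / xs i) ≤ p i * (Λ i (xEq i) / xEq i) :=
                mul_le_mul_of_nonneg_left h1 (hp i).le
          _ = πEq := by rw [← h2]; ring
        -- end
      have h3 : p i * Λ i (xs i) ≤ πEq * xs i := by
        have := mul_le_mul_of_nonneg_right hslope hxs.le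
        calc p i * Λ i (xs i) = p i * (Λ i (xs i) / xs i) * xs i := by
              field_simp
        _ ≤ πEq * xs i := this
      have h4 : 0 ≤ p i * Λ i (xEq i) :=
        mul_nonneg (hp i).le (hnn i _ (hxEqnn i))
      linarith
  calc ∑ i, p i * Λ i (xs i) ≤ ∑ i, (p i * Λ i (xEq i) + πEq * xs i) :=
        Finset.sum_le_sum (fun i _ => hpt i)
  _ = ∑ i, p i * Λ i (xEq i) + πEq * D := by
        rw [Finset.sum_add_distrib, ← Finset.mul_sum, hsum]
  _ = 2 * ∑ i, p i * Λ i (xEq i) := by rw [hprof]; ring
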